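/- Let ℓ < n, let S_ℓ ≤ S_n be the subgroup of permutations fixing each of ℓ+1,…,n, and let p be a prime with ℓ + p > n. Let g ∈ S_n \ S_ℓ be such that the number of points of {ℓ+1,…,n} moved by g is strictly less than p − ℓ. Then ν_p(g,χ) = 0 for every irreducible complex character χ of S(g) = S_ℓ ∩ g S_ℓ g⁻¹. -/

import Mathlib

open scoped BigOperators Pointwise Classical
open CategoryTheory

/-- For `H ≤ G` and `g ∈ G`, the stabilizer `S(g) = Stab_H(gH) = H ∩ gHg⁻¹`. -/
def stabCoset {G : Type*} [Group G] (H : Subgroup G) (g : G) : Subgroup G :=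
  H ⊓ Subgroup.map (MulAut.conj g).toMonoidHom H

/-- The `m`-th Frobenius–Schur indicator `ν_m(g,χ)` of the simple object of the
group-theoretical fusion category `C(G,H)` attached to `(g,χ)`:
`ν_m(g,χ) = (1/|S(g)|) Σ_{x ∈ H, (gx)^m ∈ H} conj(χ((gx)^m))`
(recall that for `x ∈ H`, `(gx)^m ∈ H` iff `(gx)^m ∈ S(g)`). -/
noncomputable def nuInd {G : Type*} [Group G] (H : Subgroup G) (g : G) (m : ℕ)
    (χ : ↥(stabCoset H g) → ℂ) : ℂ :=
  (Nat.card ↥(stabCoset H g) : ℂ)⁻¹ *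
    ∑ᶠ x : G, if h : x ∈ H ∧ (g * x) ^ m ∈ stabCoset H g
      then (starRingEnd ℂ) (χ ⟨(g * x) ^ m, h.2⟩) else 0

/-- The classical second Frobenius–Schur indicator `ν₂(θ) = (1/|K|) Σ_{x∈K} θ(x²)`. -/
noncomputable def fsInd {K : Type*} [Group K] (θ : K → ℂ) : ℂ :=
  (Nat.card K : ℂ)⁻¹ * ∑ᶠ x : K, θ (x ^ 2)

/-- The copy of `S_ℓ` inside `S_n`: permutations of `{1,…,n}` (0-indexed as `Fin n`)
fixing each of the points `ℓ+1,…,n` (0-indexed: the points with index `≥ ℓ`). -/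
def fixSubgroup (n ℓ : ℕ) : Subgroup (Equiv.Perm (Fin n)) where
  carrier := {σ | ∀ i : Fin n, ℓ ≤ (i : ℕ) → σ i = i}
  one_mem' := fun _ _ => rfl
  mul_mem' := by
    intro a b ha hb i hi
    simp only [Equiv.Perm.mul_apply, hb i hi, ha i hi]
  inv_mem' := by
    intro a ha i hi
    simp only [Set.mem_setOf_eq] at *
    exact (Equiv.symm_apply_eq a).mpr (ha i hi).symm

/-- Key combinatorial fact: no `x ∈ S_ℓ` has `(gx)^p ∈ S_ℓ`. -/
lemma key_empty (n ℓ p : ℕ) (hp : p.Prime)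
    (g : Equiv.Perm (Fin n)) (hg : g ∉ fixSubgroup n ℓ)
    (hsupp : Set.ncard {i : Fin n | ℓ ≤ (i : ℕ) ∧ g i ≠ i} < p - ℓ)
    (x : Equiv.Perm (Fin n)) (hx : x ∈ fixSubgroup n ℓ)
    (hgx : (g * x) ^ p ∈ fixSubgroup n ℓ) : False := by
  set σ := g * x with hσ
  have hg' : ¬ ∀ i : Fin n, ℓ ≤ (i : ℕ) → g i = i := hg
  push_neg at hg'
  obtain ⟨i, hi, hgi⟩ := hg'
  have hxfix : ∀ j : Fin n, ℓ ≤ (j : ℕ) → x j = j := hx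
  have hσg : ∀ j : Fin n, ℓ ≤ (j : ℕ) → σ j = g j := fun j hj => by
    simp [hσ, Equiv.Perm.mul_apply, hxfix j hj]
  have hσi : σ i ≠ i := by rw [hσg i hi]; exact hgi
  have hσpi : (σ ^ p) i = i := hgx i hi
  set c := σ.cycleOf i with hc
  have hcyc : c.IsCycle := Equiv.Perm.isCycle_cycleOf σ hσi
  have hcp : c ^ p = 1 := by
    rw [hcyc.pow_eq_one_iff]
    refine ⟨i, ?_, ?_⟩
    · rw [hc, Equiv.Perm.cycleOf_apply_self]; exact hσi
    · rw [hc, Equiv.Perm.cycleOf_pow_apply_self]; exact hσpi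
  have hord : orderOf c = p := by
    have h1 : orderOf c ∣ p := orderOf_dvd_of_pow_eq_one hcp
    rcases (hp.eq_one_or_self_of_dvd _ h1) with h | h
    · exact absurd (orderOf_eq_one_iff.mp h) hcyc.ne_one
    · exact h
  have hcard : c.support.card = p := by rw [← hcyc.orderOf, hord]
  -- count points in the cycle
  set A := c.support.filter (fun j : Fin n => (j : ℕ) < ℓ) with hA
  set B := c.support.filter (fun j : Fin n => ¬ (j : ℕ) < ℓ) with hB
  have hAB : A.card + B.card = p := by
    rw [hA, hB, Finset.card_filter_add_card_filter_not, hcard]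
  have hAle : A.card ≤ ℓ := by
    have := Finset.card_le_card_of_injOn (s := A) (t := Finset.range ℓ) (fun j : Fin n => (j : ℕ))
      (fun j hj => by
        rw [hA] at hj
        simp only [Finset.mem_coe, Finset.mem_filter] at hj
        exact Finset.mem_range.mpr hj.2)
      (fun a _ b _ h => Fin.val_injective h)
    simpa using this
  have hSfin : {i : Fin n | ℓ ≤ (i : ℕ) ∧ g i ≠ i}.Finite := Set.toFinite _
  have hBle : B.card ≤ Set.ncard {i : Fin n | ℓ ≤ (i : ℕ) ∧ g i ≠ i} := by
    rw [Set.ncard_eq_toFinset_card' ]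
    apply Finset.card_le_card
    intro j hj
    rw [hB] at hj
    simp only [Finset.mem_filter, not_lt] at hj
    have hjsupp : j ∈ σ.support := Equiv.Perm.support_cycleOf_le σ i hj.1
    have hσj : σ j ≠ j := Equiv.Perm.mem_support.mp hjsupp
    rw [Set.mem_toFinset]
    exact ⟨hj.2, by rw [← hσg j hj.2]; exact hσj⟩
  omega

/-- Let `S_ℓ ⊂ S_n` (`ℓ < n`) and let `p` be a prime with `ℓ + p > n`. If `g ∈ S_n \ S_ℓ`
moves fewer than `p − ℓ` of the points `ℓ+1,…,n`, then `ν_p(g,χ) = 0` for every irreducible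
complex character `χ` of `S(g)`. -/
theorem stmt_9 (n ℓ p : ℕ) (hl : ℓ < n) (hp : p.Prime) (hlp : n < ℓ + p)
    (g : Equiv.Perm (Fin n)) (hg : g ∉ fixSubgroup n ℓ)
    (hsupp : Set.ncard {i : Fin n | ℓ ≤ (i : ℕ) ∧ g i ≠ i} < p - ℓ) :
    ∀ (V : FDRep ℂ ↥(stabCoset (fixSubgroup n ℓ) g)), Simple V →
      nuInd (fixSubgroup n ℓ) g p V.character = 0 := by
  intro V _
  unfold nuInd
  have key : ∀ x : Equiv.Perm (Fin n),
      ¬ (x ∈ fixSubgroup n ℓ ∧ (g * x) ^ p ∈ stabCoset (fixSubgroup n ℓ) g) := by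
    rintro x ⟨hx, hgx⟩
    exact key_empty n ℓ p hp g hg hsupp x hx hgx.1
  have hz : (∑ᶠ x : Equiv.Perm (Fin n),
      if h : x ∈ fixSubgroup n ℓ ∧ (g * x) ^ p ∈ stabCoset (fixSubgroup n ℓ) g
        then (starRingEnd ℂ) (V.character ⟨(g * x) ^ p, h.2⟩) else 0) = 0 := by
    rw [finsum_congr (fun x => dif_neg (key x))]
    exact finsum_zero
  rw [hz, mul_zero]
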